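/- arXiv:2308.16038 — 2 statements merged into one kernel-verified Lean document; each statement's English description precedes it below -/
import Mathlib

section
/- Let f, g : {0,1}^n → ℝ with f ≥ 0, f not identically zero, τ > ρ, g ∗ f ≥ τ f pointwise, and ĝ(S) ≤ ρ for all |S| ≥ d. Then any code C ⊆ {0,1}^n with minimal distance ≥ d satisfies |C| ≤ ((ĝ(0) − ρ)/(τ − ρ)) · 2^n f̂(0)^2 / ⟨f,f⟩, where ⟨f,f⟩ = 2^{−n} Σ_x f(x)^2. -/
open Finset

namespace Cube

attribute [local instance] Classical.propDecidable

/-- Hamming weight of a point of the Boolean cube. -/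
def wt {n : ℕ} (x : Fin n → Bool) : ℕ := (univ.filter fun i => x i = true).card

/-- Hamming distance. -/
def hdist {n : ℕ} (x y : Fin n → Bool) : ℕ := (univ.filter fun i => x i ≠ y i).card

/-- Coordinatewise addition mod 2 (XOR). -/
def xadd {n : ℕ} (x y : Fin n → Bool) : Fin n → Bool := fun i => x i != y i

/-- Walsh character `W_S(x) = (-1)^{⟨S,x⟩}`. -/
noncomputable def W {n : ℕ} (S x : Fin n → Bool) : ℝ :=
  (-1 : ℝ) ^ (univ.filter fun i => S i = true ∧ x i = true).card

/-- Fourier transform `f̂(S) = 2^{-n} ∑_x f(x) W_S(x)`. -/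
noncomputable def ft {n : ℕ} (f : (Fin n → Bool) → ℝ) : (Fin n → Bool) → ℝ :=
  fun S => (∑ x, f x * W S x) / 2 ^ n

/-- Convolution `(f ∗ g)(x) = 2^{-n} ∑_y f(y) g(x+y)`. -/
noncomputable def conv {n : ℕ} (f g : (Fin n → Bool) → ℝ) : (Fin n → Bool) → ℝ :=
  fun x => (∑ y, f y * g (xadd x y)) / 2 ^ n

/-- Normalized inner product `⟨f,g⟩ = 2^{-n} ∑_x f(x) g(x)`. -/
noncomputable def inp {n : ℕ} (f g : (Fin n → Bool) → ℝ) : ℝ := (∑ x, f x * g x) / 2 ^ n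

/-- The all-zeros vector. -/
def zeroV (n : ℕ) : Fin n → Bool := fun _ => false

/-- Krawtchouk polynomial value `K_s(j)` (parameter `n`), at integer points. -/
noncomputable def kraw (n s j : ℕ) : ℝ :=
  ∑ k ∈ Finset.range (s + 1),
    (-1 : ℝ) ^ k * (j.choose k : ℝ) * ((n - j).choose (s - k) : ℝ)

/-- Generalized binomial coefficient `C(x,k)` for real `x`. -/
noncomputable def rchoose (x : ℝ) (k : ℕ) : ℝ :=
  (∏ i ∈ Finset.range k, (x - i)) / (k.factorial : ℝ)

/-- Krawtchouk polynomial `K_m` (parameter `n`) as a function of a real variable. -/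
noncomputable def krawR (n m : ℕ) (x : ℝ) : ℝ :=
  ∑ k ∈ Finset.range (m + 1),
    (-1 : ℝ) ^ k * rchoose x k * rchoose ((n : ℝ) - x) (m - k)

/-- Symmetrization operator: average over the Hamming sphere of the same weight. -/
noncomputable def symm {n : ℕ} (f : (Fin n → Bool) → ℝ) : (Fin n → Bool) → ℝ :=
  fun x => (∑ y ∈ univ.filter (fun y => wt y = wt x), f y) /
    ((univ.filter (fun y : Fin n → Bool => wt y = wt x)).card : ℝ)

/-- Binary entropy function. -/
noncomputable def binH (x : ℝ) : ℝ :=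
  x * Real.logb 2 (1 / x) + (1 - x) * Real.logb 2 (1 / (1 - x))

variable {n : ℕ}

lemma xadd_cancel (x y : Fin n → Bool) : xadd (xadd x y) y = x := by
  funext i; simp only [xadd]; cases x i <;> cases y i <;> rfl

lemma xadd_comm (x y : Fin n → Bool) : xadd x y = xadd y x := by
  funext i; simp only [xadd]; cases x i <;> cases y i <;> rfl

lemma xadd_eq_iff {x y z : Fin n → Bool} : xadd x y = z ↔ x = xadd z y := by
  constructor
  · rintro rfl; exact (xadd_cancel x y).symm
  · rintro rfl; exact xadd_cancel z y

lemma xadd_zero (x : Fin n → Bool) : xadd x (zeroV n) = x := by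
  funext i; simp [xadd, zeroV]

lemma xadd_self (x : Fin n → Bool) : xadd x x = zeroV n := by
  funext i; simp [xadd, zeroV]

lemma xadd_eq_zero_iff {x y : Fin n → Bool} : xadd x y = zeroV n ↔ x = y := by
  rw [xadd_eq_iff, xadd_comm, xadd_zero]

lemma wt_xadd (x y : Fin n → Bool) : wt (xadd x y) = hdist x y := by
  unfold wt hdist
  congr 1
  ext i
  simp only [mem_filter, mem_univ, true_and, xadd]
  cases hx : x i <;> cases hy : y i <;> simp [hx, hy]

lemma W_eq_prod (S x : Fin n → Bool) :
    W S x = ∏ i, (if S i = true ∧ x i = true then (-1:ℝ) else 1) := by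
  rw [W, Finset.prod_ite, Finset.prod_const, Finset.prod_const_one, mul_one]

lemma W_symm (S x : Fin n → Bool) : W S x = W x S := by
  unfold W
  congr 2
  ext i
  simp [and_comm]

lemma W_mul_right (S x y : Fin n → Bool) : W S (xadd x y) = W S x * W S y := by
  rw [W_eq_prod, W_eq_prod, W_eq_prod, ← Finset.prod_mul_distrib]
  apply Finset.prod_congr rfl
  intro i _
  simp only [xadd]
  rcases Bool.dichotomy (S i) with hs | hs <;> rcases Bool.dichotomy (x i) with hx | hx <;>
    rcases Bool.dichotomy (y i) with hy | hy <;> simp only [hs, hx, hy] <;> norm_num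

lemma W_zero_left (x : Fin n → Bool) : W (zeroV n) x = 1 := by
  simp [W, zeroV]

lemma W_zero_right (S : Fin n → Bool) : W S (zeroV n) = 1 := by
  simp [W, zeroV]

lemma sum_W (S : Fin n → Bool) : ∑ x, W S x = if S = zeroV n then (2^n : ℝ) else 0 := by
  simp_rw [W_eq_prod]
  have key := Finset.prod_univ_sum (κ := fun _ : Fin n => Bool) (fun _ => (univ : Finset Bool))
    (fun i b => if S i = true ∧ b = true then (-1:ℝ) else 1)
  rw [Fintype.piFinset_univ] at key
  rw [← key]
  by_cases h : S = zeroV n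
  · subst h
    simp [zeroV]
  · have : ∃ i, S i = true := by
      by_contra hc
      push_neg at hc
      exact h (funext fun i => by simpa [zeroV] using hc i)
    obtain ⟨i, hi⟩ := this
    rw [if_neg h]
    apply Finset.prod_eq_zero (Finset.mem_univ i)
    simp [hi]

lemma sum_W' (x : Fin n → Bool) : ∑ S, W S x = if x = zeroV n then (2^n : ℝ) else 0 := by
  simp_rw [W_symm]
  exact sum_W x


lemma xadd_xadd_eq_zero_iff {a b S : Fin n → Bool} :
    xadd (xadd a b) S = zeroV n ↔ b = xadd a S := by
  rw [xadd_eq_zero_iff, xadd_comm a b, xadd_eq_iff, xadd_comm]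

lemma sum_ft_mul (u v : (Fin n → Bool) → ℝ) (S : Fin n → Bool) :
    ∑ x, ft u x * ft v x * W S x = (∑ a, u a * v (xadd a S)) / 2 ^ n := by
  have h2n : (2:ℝ)^n ≠ 0 := by positivity
  have key : ∑ x, (∑ a, u a * W x a) * (∑ b, v b * W x b) * W S x
      = 2^n * ∑ a, u a * v (xadd a S) := by
    calc ∑ x, (∑ a, u a * W x a) * (∑ b, v b * W x b) * W S x
        = ∑ x, ∑ a, ∑ b, u a * v b * (W x a * W x b * W x S) := by
          refine Finset.sum_congr rfl fun x _ => ?_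
          rw [W_symm S x, Finset.sum_mul_sum]
          simp only [Finset.sum_mul]
          exact Finset.sum_congr rfl fun a _ => Finset.sum_congr rfl fun b _ => by ring
      _ = ∑ a, ∑ b, u a * v b * ∑ x, W x a * W x b * W x S := by
          rw [Finset.sum_comm]
          refine Finset.sum_congr rfl fun a _ => ?_
          rw [Finset.sum_comm]
          refine Finset.sum_congr rfl fun b _ => ?_
          rw [← Finset.mul_sum]
      _ = ∑ a, ∑ b, u a * v b * (if b = xadd a S then (2^n:ℝ) else 0) := by
          refine Finset.sum_congr rfl fun a _ => Finset.sum_congr rfl fun b _ => ?_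
          congr 1
          have hw : ∀ x : Fin n → Bool, W x a * W x b * W x S = W x (xadd (xadd a b) S) := by
            intro x; rw [W_mul_right, W_mul_right]
          simp_rw [hw]
          rw [sum_W' (xadd (xadd a b) S)]
          exact if_congr xadd_xadd_eq_zero_iff rfl rfl
      _ = ∑ a, u a * v (xadd a S) * (2^n : ℝ) := by
          refine Finset.sum_congr rfl fun a _ => ?_
          simp only [mul_ite, mul_zero]
          rw [Finset.sum_ite_eq' univ (xadd a S) (fun b => u a * v b * 2^n)]
          simp
      _ = 2^n * ∑ a, u a * v (xadd a S) := by
          rw [Finset.mul_sum]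
          exact Finset.sum_congr rfl fun a _ => by ring
  have hx : ∀ x, ft u x * ft v x * W S x
      = ((∑ a, u a * W x a) * (∑ b, v b * W x b) * W S x) / (2^n * 2^n) := by
    intro x; simp only [ft]; ring
  simp_rw [hx]
  rw [← Finset.sum_div, key, mul_div_mul_left _ _ h2n]

lemma ft_conv (u v : (Fin n → Bool) → ℝ) (S : Fin n → Bool) :
    ft (conv u v) S = ft u S * ft v S := by
  have key : ∑ x, (∑ y, u y * v (xadd x y)) * W S x
      = (∑ y, u y * W S y) * (∑ z, v z * W S z) := by
    calc ∑ x, (∑ y, u y * v (xadd x y)) * W S x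
        = ∑ x, ∑ y, u y * (v (xadd x y) * W S x) := by
          refine Finset.sum_congr rfl fun x _ => ?_
          rw [Finset.sum_mul]
          exact Finset.sum_congr rfl fun y _ => by ring
      _ = ∑ y, u y * ∑ x, v (xadd x y) * W S x := by
          rw [Finset.sum_comm]
          exact Finset.sum_congr rfl fun y _ => by rw [Finset.mul_sum]
      _ = ∑ y, u y * ∑ z, v z * (W S z * W S y) := by
          refine Finset.sum_congr rfl fun y _ => ?_
          congr 1
          have hb : Function.Bijective (fun z : Fin n → Bool => xadd z y) :=
            Function.Involutive.bijective (fun z => xadd_cancel z y)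
          exact (Fintype.sum_bijective _ hb _ _ (fun z => by
            simp only [xadd_cancel, W_mul_right])).symm
      _ = (∑ y, u y * W S y) * (∑ z, v z * W S z) := by
          rw [Finset.sum_mul]
          refine Finset.sum_congr rfl fun y _ => ?_
          rw [Finset.mul_sum, Finset.mul_sum]
          exact Finset.sum_congr rfl fun z _ => by ring
  simp only [ft, conv]
  rw [div_mul_div_comm]
  simp_rw [div_mul_eq_mul_div]
  rw [← Finset.sum_div, key, div_div]


theorem two_function_code_bound (n d : ℕ) (f g : (Fin n → Bool) → ℝ) (τ ρ : ℝ)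
    (hf : ∀ x, 0 ≤ f x) (hf_ne : f ≠ 0) (hτρ : ρ < τ)
    (h1 : ∀ x, τ * f x ≤ conv g f x)
    (h2 : ∀ S : Fin n → Bool, d ≤ wt S → ft g S ≤ ρ)
    (C : Finset (Fin n → Bool))
    (hC : ∀ x ∈ C, ∀ y ∈ C, x ≠ y → d ≤ hdist x y) :
    (C.card : ℝ) ≤ (ft g (zeroV n) - ρ) / (τ - ρ) *
      (2 ^ n * (ft f (zeroV n)) ^ 2 / inp f f) := by
  have h2npos : (0:ℝ) < 2 ^ n := by positivity
  set h : (Fin n → Bool) → ℝ := fun x => (ft f x)^2 * (ft g x - ρ) with hh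
  set A : (Fin n → Bool) → ℝ := fun S => ∑ x, h x * W S x with hA
  set K : (Fin n → Bool) → ℝ := fun S => ∑ c ∈ C, W S c with hK
  have hA_formula : ∀ S, A S
      = (∑ a, f a * (conv g f (xadd a S) - ρ * f (xadd a S))) / 2 ^ n := by
    intro S
    have e1 : ∀ x, h x * W S x
        = ft f x * ft (conv g f) x * W S x - ρ * (ft f x * ft f x * W S x) := by
      intro x
      rw [ft_conv]
      simp only [hh]
      ring
    calc (∑ x, h x * W S x)
        = ∑ x, (ft f x * ft (conv g f) x * W S x - ρ * (ft f x * ft f x * W S x)) :=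
          Finset.sum_congr rfl fun x _ => e1 x
      _ = (∑ x, ft f x * ft (conv g f) x * W S x) - ρ * ∑ x, ft f x * ft f x * W S x := by
          rw [Finset.sum_sub_distrib, Finset.mul_sum]
      _ = (∑ a, f a * conv g f (xadd a S)) / 2^n - ρ * ((∑ a, f a * f (xadd a S)) / 2^n) := by
          rw [sum_ft_mul, sum_ft_mul]
      _ = (∑ a, f a * (conv g f (xadd a S) - ρ * f (xadd a S))) / 2 ^ n := by
          have e2 : ∑ a, f a * (conv g f (xadd a S) - ρ * f (xadd a S))
              = (∑ a, f a * conv g f (xadd a S)) - ρ * ∑ a, f a * f (xadd a S) := by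
            rw [Finset.mul_sum, ← Finset.sum_sub_distrib]
            exact Finset.sum_congr rfl fun a _ => by ring
          rw [e2, sub_div, mul_div_assoc]
  have hA_lb : ∀ S, (τ - ρ) * ((∑ a, f a * f (xadd a S)) / 2^n) ≤ A S := by
    intro S
    rw [hA_formula S, ← mul_div_assoc]
    gcongr
    rw [Finset.mul_sum]
    apply Finset.sum_le_sum
    intro a _
    have hkey := mul_le_mul_of_nonneg_left (h1 (xadd a S)) (hf a)
    nlinarith [hkey]
  have hsum_sq_nonneg : ∀ S : Fin n → Bool, 0 ≤ ∑ a, f a * f (xadd a S) :=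
    fun S => Finset.sum_nonneg fun a _ => mul_nonneg (hf a) (hf _)
  have hA_nonneg : ∀ S, 0 ≤ A S := fun S =>
    le_trans (mul_nonneg (sub_nonneg.2 hτρ.le)
      (div_nonneg (hsum_sq_nonneg S) h2npos.le)) (hA_lb S)
  have hA0 : (τ - ρ) * inp f f ≤ A (zeroV n) := by
    have hlb := hA_lb (zeroV n)
    simp_rw [xadd_zero] at hlb
    exact hlb
  have key3 : ∀ (x c c' : Fin n → Bool), (∑ S, W S x * (W S c * W S c'))
      = if x = xadd c' c then (2^n:ℝ) else 0 := by
    intro x c c'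
    have hw : ∀ S, W S x * (W S c * W S c') = W S (xadd x (xadd c c')) := by
      intro S; rw [W_mul_right, W_mul_right]
    simp_rw [hw]
    rw [sum_W']
    refine if_congr ?_ rfl rfl
    rw [xadd_eq_zero_iff, xadd_comm c c']
  have hQuad : ∑ S, A S * K S ^ 2 = 2^n * ∑ c ∈ C, ∑ c' ∈ C, h (xadd c' c) := by
    calc ∑ S, A S * K S ^ 2
        = ∑ S, ∑ x, ∑ c ∈ C, ∑ c' ∈ C, h x * (W S x * (W S c * W S c')) := by
          refine Finset.sum_congr rfl fun S _ => ?_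
          rw [hA, hK, sq, Finset.sum_mul_sum, Finset.sum_mul]
          refine Finset.sum_congr rfl fun x _ => ?_
          rw [Finset.mul_sum]
          refine Finset.sum_congr rfl fun c _ => ?_
          rw [Finset.mul_sum]
          exact Finset.sum_congr rfl fun c' _ => by ring
      _ = ∑ x, ∑ c ∈ C, ∑ c' ∈ C, h x * ∑ S, (W S x * (W S c * W S c')) := by
          rw [Finset.sum_comm]
          refine Finset.sum_congr rfl fun x _ => ?_
          rw [Finset.sum_comm]
          refine Finset.sum_congr rfl fun c _ => ?_
          rw [Finset.sum_comm]
          refine Finset.sum_congr rfl fun c' _ => ?_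
          rw [Finset.mul_sum]
      _ = ∑ x, ∑ c ∈ C, ∑ c' ∈ C, h x * (if x = xadd c' c then (2^n:ℝ) else 0) := by
          simp_rw [key3]
      _ = ∑ c ∈ C, ∑ c' ∈ C, h (xadd c' c) * 2^n := by
          rw [Finset.sum_comm]
          refine Finset.sum_congr rfl fun c _ => ?_
          rw [Finset.sum_comm]
          refine Finset.sum_congr rfl fun c' _ => ?_
          simp only [mul_ite, mul_zero]
          rw [Finset.sum_ite_eq' univ (xadd c' c) (fun x => h x * 2^n)]
          simp
      _ = 2^n * ∑ c ∈ C, ∑ c' ∈ C, h (xadd c' c) := by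
          rw [Finset.mul_sum]
          refine Finset.sum_congr rfl fun c _ => ?_
          rw [Finset.mul_sum]
          exact Finset.sum_congr rfl fun c' _ => by ring
  have hh0 : ∑ S, A S = 2^n * h (zeroV n) := by
    calc ∑ S, A S = ∑ x, h x * ∑ S, W S x := by
          simp only [hA]
          rw [Finset.sum_comm]
          exact Finset.sum_congr rfl fun x _ => by rw [Finset.mul_sum]
      _ = ∑ x, h x * (if x = zeroV n then (2^n:ℝ) else 0) := by simp_rw [sum_W']
      _ = 2^n * h (zeroV n) := by
          simp only [mul_ite, mul_zero]
          rw [Finset.sum_ite_eq' univ (zeroV n) (fun x => h x * 2^n)]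
          simp [mul_comm]
  have hKcard : K (zeroV n) = C.card := by simp [hK, W_zero_left]
  have step1 : A (zeroV n) * (C.card:ℝ)^2 ≤ ∑ S, A S * K S ^ 2 := by
    have hs : A (zeroV n) * K (zeroV n) ^ 2 ≤ ∑ S, A S * K S ^ 2 :=
      Finset.single_le_sum (f := fun S => A S * K S ^ 2)
        (fun S _ => mul_nonneg (hA_nonneg S) (sq_nonneg _)) (Finset.mem_univ (zeroV n))
    rwa [hKcard] at hs
  have perc : ∀ c ∈ C, ∑ c' ∈ C, h (xadd c' c) ≤ h (zeroV n) := by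
    intro c hc
    rw [← Finset.add_sum_erase C (fun c' => h (xadd c' c)) hc, xadd_self]
    have hrest : ∑ c' ∈ C.erase c, h (xadd c' c) ≤ 0 := by
      apply Finset.sum_nonpos
      intro c' hc'
      have hne : c' ≠ c := Finset.ne_of_mem_erase hc'
      have hc'C : c' ∈ C := Finset.mem_of_mem_erase hc'
      have hd : d ≤ wt (xadd c' c) := by rw [wt_xadd]; exact hC c' hc'C c hc hne
      have hgle := h2 _ hd
      simp only [hh]
      exact mul_nonpos_of_nonneg_of_nonpos (sq_nonneg _) (sub_nonpos.2 hgle)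
    linarith
  have step2 : ∑ c ∈ C, ∑ c' ∈ C, h (xadd c' c) ≤ C.card * h (zeroV n) := by
    calc ∑ c ∈ C, ∑ c' ∈ C, h (xadd c' c) ≤ ∑ _c ∈ C, h (zeroV n) := Finset.sum_le_sum perc
      _ = C.card * h (zeroV n) := by rw [Finset.sum_const, nsmul_eq_mul]
  have hfpos : ∃ x₀, 0 < f x₀ := by
    by_contra hcon; push_neg at hcon
    exact hf_ne (funext fun x => le_antisymm (hcon x) (hf x))
  obtain ⟨x₀, hx₀⟩ := hfpos
  have hPpos : 0 < inp f f := by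
    apply div_pos _ h2npos
    exact Finset.sum_pos' (fun x _ => mul_nonneg (hf x) (hf x))
      ⟨x₀, Finset.mem_univ x₀, mul_pos hx₀ hx₀⟩
  have hA0pos : 0 < A (zeroV n) := lt_of_lt_of_le (mul_pos (sub_pos.2 hτρ) hPpos) hA0
  have hh0pos : 0 < h (zeroV n) := by
    have hs : A (zeroV n) ≤ ∑ S, A S :=
      Finset.single_le_sum (fun S _ => hA_nonneg S) (Finset.mem_univ _)
    rw [hh0] at hs
    nlinarith [hs, hA0pos, h2npos]
  have hft0pos : 0 < ft f (zeroV n) := by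
    have : ft f (zeroV n) = (∑ x, f x * W (zeroV n) x) / 2^n := rfl
    rw [this]
    simp_rw [W_zero_left, mul_one]
    exact div_pos (Finset.sum_pos' (fun x _ => hf x) ⟨x₀, Finset.mem_univ x₀, hx₀⟩) h2npos
  have h0eq : h (zeroV n) = (ft f (zeroV n))^2 * (ft g (zeroV n) - ρ) := rfl
  have hgρpos : 0 < ft g (zeroV n) - ρ := by
    rw [h0eq] at hh0pos
    nlinarith [hh0pos, sq_nonneg (ft f (zeroV n))]
  have main : (τ - ρ) * inp f f * (C.card:ℝ)^2 ≤ 2^n * ((C.card:ℝ) * h (zeroV n)) := by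
    calc (τ - ρ) * inp f f * (C.card:ℝ)^2 ≤ A (zeroV n) * (C.card:ℝ)^2 :=
          mul_le_mul_of_nonneg_right hA0 (sq_nonneg _)
      _ ≤ ∑ S, A S * K S ^ 2 := step1
      _ = 2^n * ∑ c ∈ C, ∑ c' ∈ C, h (xadd c' c) := hQuad
      _ ≤ 2^n * ((C.card:ℝ) * h (zeroV n)) := by
          exact mul_le_mul_of_nonneg_left step2 h2npos.le
  rcases Nat.eq_zero_or_pos C.card with hM | hM
  · have hRHS : (0:ℝ) ≤ (ft g (zeroV n) - ρ) / (τ - ρ) *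
        (2 ^ n * (ft f (zeroV n)) ^ 2 / inp f f) :=
      mul_nonneg (div_nonneg hgρpos.le (sub_pos.2 hτρ).le)
        (div_nonneg (by positivity) hPpos.le)
    rw [hM]
    simpa using hRHS
  · have hMpos : (0:ℝ) < C.card := by exact_mod_cast hM
    have key : (τ - ρ) * inp f f * (C.card:ℝ) ≤ 2^n * h (zeroV n) := by
      have h' : ((τ - ρ) * inp f f * (C.card:ℝ)) * (C.card:ℝ)
          ≤ (2^n * h (zeroV n)) * (C.card:ℝ) := by nlinarith [main]
      exact le_of_mul_le_mul_right h' hMpos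
    rw [div_mul_div_comm, le_div_iff₀ (mul_pos (sub_pos.2 hτρ) hPpos)]
    rw [h0eq] at key
    nlinarith [key]

end Cube
end

section
/- Let d = δn < βn < n/2 and let K_m have smallest root x₁ with x₁ − 1 > βn. Then for every integer i with βn ≤ i ≤ x₁ − 1, K_m(i) > 0 and K_m(i)/K_m(d) ≤ (x₁ − i)/(x₁ − d) ≤ (1 − 2β)/(2β − 2δ). -/
open Finset

namespace Cube

attribute [local instance] Classical.propDecidable

open Polynomial

lemma rchoose_nat (j k : ℕ) : rchoose (j : ℝ) k = (j.choose k : ℝ) := by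
  induction k with
  | zero => simp [rchoose]
  | succ k ih =>
    rcases le_or_gt (k+1) j with h | h
    · have hk : k ≤ j := le_trans (Nat.le_succ k) h
      have hprod : (∏ i ∈ Finset.range k, ((j:ℝ) - i)) = (j.choose k : ℝ) * (k.factorial : ℝ) := by
        have := ih
        rw [rchoose, div_eq_iff (by exact_mod_cast k.factorial_ne_zero)] at this
        exact this
      have hcse : ((j.choose (k+1) : ℝ)) * ((k:ℝ)+1) = (j.choose k : ℝ) * ((j:ℝ) - k) := by
        have := Nat.choose_succ_right_eq j k
        have hc : ((j - k : ℕ) : ℝ) = (j:ℝ) - k := by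
          have : (k:ℝ) ≤ j := by exact_mod_cast hk
          push_cast [hk]; ring
        calc ((j.choose (k+1) : ℝ)) * ((k:ℝ)+1) = ((j.choose (k+1) * (k+1) : ℕ) : ℝ) := by push_cast; ring
          _ = ((j.choose k * (j - k) : ℕ) : ℝ) := by rw [this]
          _ = (j.choose k : ℝ) * ((j:ℝ) - k) := by push_cast [hk]; ring
      rw [rchoose, Finset.prod_range_succ, hprod, Nat.factorial_succ]
      have hfk : (k.factorial : ℝ) ≠ 0 := by exact_mod_cast k.factorial_ne_zero
      have hk1 : ((k:ℝ)+1) ≠ 0 := by positivity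
      field_simp
      push_cast
      nlinarith [hcse]
    · have hj : j ∈ Finset.range (k+1) := Finset.mem_range.2 h
      rw [rchoose, Finset.prod_eq_zero hj (by simp), Nat.choose_eq_zero_of_lt h]
      simp

lemma krawR_nat (n m j : ℕ) (hj : j ≤ n) : krawR n m (j : ℝ) = kraw n m j := by
  unfold krawR kraw
  refine Finset.sum_congr rfl fun k _ => ?_
  rw [rchoose_nat]
  have : (n : ℝ) - (j : ℝ) = ((n - j : ℕ) : ℝ) := by
    push_cast [hj]; ring
  rw [this, rchoose_nat]

lemma rchoose_zero_left (k : ℕ) (hk : k ≠ 0) : rchoose 0 k = 0 := by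
  rw [rchoose, Finset.prod_eq_zero (Finset.mem_range.2 (Nat.pos_of_ne_zero hk)) (by simp)]
  simp

lemma krawR_zero (n m : ℕ) : krawR n m 0 = rchoose (n : ℝ) m := by
  unfold krawR
  rw [Finset.sum_eq_single 0]
  · simp [rchoose]
  · intro k hk hk0
    rw [rchoose_zero_left k hk0]; ring
  · intro h; exact absurd (Finset.mem_range.2 (Nat.succ_pos m)) h

lemma rchoose_pos (n m : ℕ) (hm : m ≤ n) : 0 < rchoose (n : ℝ) m := by
  rw [rchoose]
  apply div_pos
  · apply Finset.prod_pos
    intro i hi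
    have : i < m := Finset.mem_range.1 hi
    have : i < n := lt_of_lt_of_le this hm
    have : (i:ℝ) < n := by exact_mod_cast this
    linarith
  · exact_mod_cast m.factorial_pos

lemma krawR_reflect (n m : ℕ) (x : ℝ) :
    krawR n m ((n:ℝ) - x) = (-1)^m * krawR n m x := by
  unfold krawR
  rw [Finset.mul_sum, ← Finset.sum_range_reflect]
  refine Finset.sum_congr rfl fun k hk => ?_
  have hk' : k ≤ m := Nat.lt_succ_iff.1 (Finset.mem_range.1 hk)
  have h0 : m + 1 - 1 - k = m - k := by omega
  have h1 : m - (m - k) = k := Nat.sub_sub_self hk'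
  have h2 : (n:ℝ) - ((n:ℝ) - x) = x := by ring
  rw [h0, h2, h1]
  have h3 : (-1:ℝ)^(m-k) * (-1)^k = (-1)^m := by
    rw [← pow_add]
    congr 1
    omega
  have h4 : (-1:ℝ)^k * (-1)^k = 1 := by rw [← mul_pow]; norm_num
  have h5 : (-1:ℝ)^(m-k) = (-1)^m * (-1)^k := by
    calc (-1:ℝ)^(m-k) = (-1)^(m-k) * ((-1)^k * (-1)^k) := by rw [h4, mul_one]
      _ = ((-1)^(m-k) * (-1)^k) * (-1)^k := by ring
      _ = (-1)^m * (-1)^k := by rw [h3]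
  rw [h5]; ring

noncomputable def bpoly (k : ℕ) : Polynomial ℝ :=
  ∏ i ∈ Finset.range k, (Polynomial.X - Polynomial.C (i:ℝ))
noncomputable def gpoly (n k : ℕ) : Polynomial ℝ :=
  Polynomial.C ((-1:ℝ)^k) * ∏ i ∈ Finset.range k, (Polynomial.X - Polynomial.C ((n:ℝ) - i))
noncomputable def krawPoly (n m : ℕ) : Polynomial ℝ :=
  ∑ k ∈ Finset.range (m+1),
    Polynomial.C ((-1:ℝ)^k / ((k.factorial : ℝ) * ((m-k).factorial : ℝ))) *
      (bpoly k * gpoly n (m-k))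

lemma bpoly_monic (k : ℕ) : (bpoly k).Monic :=
  monic_prod_of_monic _ _ fun i _ => monic_X_sub_C _

lemma bpoly_natDegree (k : ℕ) : (bpoly k).natDegree = k := by
  rw [bpoly, natDegree_prod_of_monic _ _ fun i _ => monic_X_sub_C _,
    Finset.sum_congr rfl fun i _ => natDegree_X_sub_C _, Finset.sum_const, Finset.card_range, smul_eq_mul, mul_one]

lemma bpoly_eval (k : ℕ) (x : ℝ) : (bpoly k).eval x = ∏ i ∈ Finset.range k, (x - i) := by
  simp [bpoly, eval_prod]

lemma gpoly_eval (n k : ℕ) (x : ℝ) :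
    (gpoly n k).eval x = ∏ i ∈ Finset.range k, ((n:ℝ) - x - i) := by
  rw [gpoly, eval_mul, eval_C, eval_prod]
  calc (-1:ℝ)^k * ∏ j ∈ Finset.range k, Polynomial.eval x (Polynomial.X - Polynomial.C ((n:ℝ) - j))
      = ∏ j ∈ Finset.range k, (-1) * Polynomial.eval x (Polynomial.X - Polynomial.C ((n:ℝ) - j)) := by
        rw [Finset.prod_mul_distrib, Finset.prod_const, Finset.card_range]
    _ = ∏ i ∈ Finset.range k, ((n:ℝ) - x - i) := by
        refine Finset.prod_congr rfl fun i _ => ?_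
        simp; ring

lemma gpoly_prod_ne (n k : ℕ) :
    (∏ i ∈ Finset.range k, (Polynomial.X - Polynomial.C ((n:ℝ) - i))) ≠ 0 :=
  (monic_prod_of_monic _ _ fun i _ => monic_X_sub_C _).ne_zero

lemma gpoly_natDegree (n k : ℕ) : (gpoly n k).natDegree = k := by
  rw [gpoly, natDegree_C_mul (by positivity : ((-1:ℝ)^k) ≠ 0),
    natDegree_prod_of_monic _ _ fun i _ => monic_X_sub_C _,
    Finset.sum_congr rfl fun i _ => natDegree_X_sub_C _, Finset.sum_const, Finset.card_range, smul_eq_mul, mul_one]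

lemma gpoly_leadingCoeff (n k : ℕ) : (gpoly n k).leadingCoeff = (-1:ℝ)^k := by
  rw [gpoly, leadingCoeff_mul, leadingCoeff_C,
    (monic_prod_of_monic _ _ fun i _ => monic_X_sub_C _ : Monic _).leadingCoeff, mul_one]

lemma krawPoly_eval (n m : ℕ) (x : ℝ) : (krawPoly n m).eval x = krawR n m x := by
  rw [krawPoly, eval_finset_sum, krawR]
  refine Finset.sum_congr rfl fun k hk => ?_
  rw [eval_mul, eval_mul, eval_C, bpoly_eval, gpoly_eval, rchoose, rchoose]
  have h1 : (k.factorial : ℝ) ≠ 0 := by exact_mod_cast k.factorial_ne_zero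
  have h2 : (((m-k).factorial : ℕ) : ℝ) ≠ 0 := by exact_mod_cast (m-k).factorial_ne_zero
  have : ∏ i ∈ Finset.range (m-k), ((n:ℝ) - x - i) = ∏ i ∈ Finset.range (m-k), ((n:ℝ) - x - i) := rfl
  field_simp

lemma krawPoly_coeff_m (n m : ℕ) :
    (krawPoly n m).coeff m =
      (-1:ℝ)^m * ∑ k ∈ Finset.range (m+1), (1 / ((k.factorial : ℝ) * ((m-k).factorial : ℝ))) := by
  rw [krawPoly, finset_sum_coeff, Finset.mul_sum]
  refine Finset.sum_congr rfl fun k hk => ?_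
  have hk' : k ≤ m := Nat.lt_succ_iff.1 (Finset.mem_range.1 hk)
  rw [coeff_C_mul]
  have hco : (bpoly k * gpoly n (m-k)).coeff m
      = (bpoly k).leadingCoeff * (gpoly n (m-k)).leadingCoeff := by
    have h := coeff_mul_degree_add_degree (bpoly k) (gpoly n (m-k))
    rwa [bpoly_natDegree, gpoly_natDegree, show k + (m-k) = m by omega] at h
  rw [hco, (bpoly_monic k).leadingCoeff, gpoly_leadingCoeff]
  have h5 : (-1:ℝ)^k * (-1)^(m-k) = (-1)^m := by rw [← pow_add]; congr 1; omega
  field_simp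
  nlinarith [h5]

lemma krawPoly_coeff_m_ne (n m : ℕ) : (krawPoly n m).coeff m ≠ 0 := by
  rw [krawPoly_coeff_m]
  have hS : 0 < ∑ k ∈ Finset.range (m+1), (1 / ((k.factorial : ℝ) * ((m-k).factorial : ℝ))) := by
    apply Finset.sum_pos
    · intro k _
      have h1 : (0:ℝ) < k.factorial := by exact_mod_cast k.factorial_pos
      have h2 : (0:ℝ) < (m-k).factorial := by exact_mod_cast (m-k).factorial_pos
      positivity
    · exact ⟨0, Finset.mem_range.2 (Nat.succ_pos m)⟩
  have : (-1:ℝ)^m ≠ 0 := by positivity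
  exact mul_ne_zero this (ne_of_gt hS)

lemma krawPoly_natDegree (n m : ℕ) : (krawPoly n m).natDegree = m := by
  apply le_antisymm
  · apply natDegree_sum_le_of_forall_le
    intro k hk
    have hk' : k ≤ m := Nat.lt_succ_iff.1 (Finset.mem_range.1 hk)
    calc (Polynomial.C ((-1:ℝ)^k / ((k.factorial : ℝ) * ((m-k).factorial : ℝ))) *
          (bpoly k * gpoly n (m-k))).natDegree
        ≤ (Polynomial.C ((-1:ℝ)^k / ((k.factorial : ℝ) * ((m-k).factorial : ℝ)))).natDegree +
          (bpoly k * gpoly n (m-k)).natDegree := natDegree_mul_le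
      _ ≤ 0 + ((bpoly k).natDegree + (gpoly n (m-k)).natDegree) := by
          gcongr
          · exact le_of_eq (natDegree_C _)
          · exact natDegree_mul_le
      _ ≤ m := by rw [bpoly_natDegree, gpoly_natDegree]; omega
  · exact le_natDegree_of_ne_zero (krawPoly_coeff_m_ne n m)

lemma krawPoly_ne_zero (n m : ℕ) : krawPoly n m ≠ 0 := fun h => by
  have := krawPoly_coeff_m_ne n m
  rw [h] at this; simp at this

lemma fiber_card (n m k : ℕ) (hk : k ≤ m) (x : Finset (Fin n)) :
    ((powersetCard m (univ : Finset (Fin n))).filter fun S => (S ∩ x).card = k).card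
      = (x.card.choose k) * ((n - x.card).choose (m - k)) := by
  have hbij : ((powersetCard m (univ : Finset (Fin n))).filter fun S => (S ∩ x).card = k).card
      = ((powersetCard k x) ×ˢ (powersetCard (m-k) xᶜ)).card := by
    apply Finset.card_bij' (fun S _ => (S ∩ x, S \ x)) (fun p _ => p.1 ∪ p.2)
    · intro S hS
      rw [Finset.mem_filter, Finset.mem_powersetCard] at hS
      obtain ⟨⟨_, hcard⟩, hxk⟩ := hS
      rw [Finset.mem_product, Finset.mem_powersetCard, Finset.mem_powersetCard]
      refine ⟨⟨Finset.inter_subset_right, hxk⟩, ?_, ?_⟩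
      · intro a ha
        rw [Finset.mem_sdiff] at ha
        exact Finset.mem_compl.2 ha.2
      · show (S \ x).card = m - k
        have h3 := Finset.card_inter_add_card_sdiff S x
        omega
    · intro p hp
      rw [Finset.mem_product, Finset.mem_powersetCard, Finset.mem_powersetCard] at hp
      obtain ⟨⟨hp1, hc1⟩, hp2, hc2⟩ := hp
      have hdisj : Disjoint p.1 p.2 := by
        apply Finset.disjoint_left.2
        intro a ha1 ha2
        exact Finset.mem_compl.1 (hp2 ha2) (hp1 ha1)
      rw [Finset.mem_filter, Finset.mem_powersetCard]
      have hint : (p.1 ∪ p.2) ∩ x = p.1 := by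
        rw [Finset.union_inter_distrib_right]
        have h1 : p.1 ∩ x = p.1 := Finset.inter_eq_left.2 hp1
        have h2 : p.2 ∩ x = ∅ := by
          apply Finset.eq_empty_of_forall_notMem
          intro a ha
          rw [Finset.mem_inter] at ha
          exact Finset.mem_compl.1 (hp2 ha.1) ha.2
        rw [h1, h2, Finset.union_empty]
      refine ⟨⟨Finset.subset_univ _, ?_⟩, by rw [hint, hc1]⟩
      rw [Finset.card_union_of_disjoint hdisj, hc1, hc2]
      omega
    · intro S hS
      ext a
      simp only [Finset.mem_union, Finset.mem_inter, Finset.mem_sdiff]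
      tauto
    · intro p hp
      rw [Finset.mem_product, Finset.mem_powersetCard, Finset.mem_powersetCard] at hp
      obtain ⟨⟨hp1, hc1⟩, hp2, hc2⟩ := hp
      have hint : (p.1 ∪ p.2) ∩ x = p.1 := by
        rw [Finset.union_inter_distrib_right]
        have h1 : p.1 ∩ x = p.1 := Finset.inter_eq_left.2 hp1
        have h2 : p.2 ∩ x = ∅ := by
          apply Finset.eq_empty_of_forall_notMem
          intro a ha
          rw [Finset.mem_inter] at ha
          exact Finset.mem_compl.1 (hp2 ha.1) ha.2
        rw [h1, h2, Finset.union_empty]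
      have hsd : (p.1 ∪ p.2) \ x = p.2 := by
        rw [Finset.union_sdiff_distrib]
        have h1 : p.1 \ x = ∅ := Finset.sdiff_eq_empty_iff_subset.2 hp1
        have h2 : p.2 \ x = p.2 := by
          ext a
          simp only [Finset.mem_sdiff]
          exact ⟨fun h => h.1, fun h => ⟨h, Finset.mem_compl.1 (hp2 h)⟩⟩
        rw [h1, h2, Finset.empty_union]
      rw [hint, hsd]
  rw [hbij, Finset.card_product, Finset.card_powersetCard, Finset.card_powersetCard,
    Finset.card_compl, Fintype.card_fin]

lemma kraw_as_sum (n m : ℕ) (x : Finset (Fin n)) :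
    kraw n m x.card = ∑ S ∈ powersetCard m (univ : Finset (Fin n)), (-1:ℝ)^((S ∩ x).card) := by
  have hmaps : ∀ S ∈ powersetCard m (univ : Finset (Fin n)), (S ∩ x).card ∈ Finset.range (m+1) := by
    intro S hS
    rw [Finset.mem_powersetCard] at hS
    rw [Finset.mem_range, Nat.lt_succ_iff, ← hS.2]
    exact Finset.card_le_card Finset.inter_subset_left
  rw [← Finset.sum_fiberwise_of_maps_to hmaps, kraw]
  refine Finset.sum_congr rfl fun k hk => ?_
  have hk' : k ≤ m := Nat.lt_succ_iff.1 (Finset.mem_range.1 hk)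
  have : ∀ S ∈ (powersetCard m (univ : Finset (Fin n))).filter fun S => (S ∩ x).card = k,
      (-1:ℝ)^((S ∩ x).card) = (-1:ℝ)^k := by
    intro S hS
    rw [(Finset.mem_filter.1 hS).2]
  rw [Finset.sum_congr rfl this, Finset.sum_const, fiber_card n m k hk' x, nsmul_eq_mul]
  push_cast
  ring

lemma sum_parity_zero (n : ℕ) (S T : Finset (Fin n)) (hST : (S \ T).Nonempty) :
    ∑ y ∈ (univ : Finset (Finset (Fin n))).filter (fun y => T ⊆ y), (-1:ℝ)^((S ∩ y).card) = 0 := by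
  obtain ⟨e, he⟩ := hST
  rw [Finset.mem_sdiff] at he
  obtain ⟨heS, heT⟩ := he
  apply Finset.sum_involution (fun y _ => if e ∈ y then y.erase e else insert e y)
  · intro y hy
    by_cases hey : e ∈ y
    · simp only [if_pos hey]
      have h1 : S ∩ y.erase e = (S ∩ y).erase e := Finset.inter_erase e S y
      have h2 : e ∈ S ∩ y := Finset.mem_inter.2 ⟨heS, hey⟩
      rw [h1, Finset.card_erase_of_mem h2]
      obtain ⟨c, hc⟩ : ∃ c', (S ∩ y).card = c' + 1 :=
        ⟨(S ∩ y).card - 1, by have := Finset.card_pos.2 ⟨e, h2⟩; omega⟩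
      rw [hc]
      simp [pow_succ]
    · simp only [if_neg hey]
      have h1 : S ∩ insert e y = insert e (S ∩ y) := Finset.inter_insert_of_mem heS
      have h2 : e ∉ S ∩ y := fun h => hey (Finset.mem_inter.1 h).2
      rw [h1, Finset.card_insert_of_notMem h2, pow_succ]
      ring
  · intro y hy hfy
    by_cases hey : e ∈ y
    · rw [if_pos hey]
      intro h
      apply Finset.notMem_erase e y
      rw [h]; exact hey
    · rw [if_neg hey]
      intro h
      apply hey
      rw [← h]; exact Finset.mem_insert_self e y
  · intro y hy
    by_cases hey : e ∈ y
    · rw [if_pos hey]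
      rw [if_neg (Finset.notMem_erase e y), Finset.insert_erase hey]
    · rw [if_neg hey]
      rw [if_pos (Finset.mem_insert_self e y), Finset.erase_insert hey]
  · intro y hy
    rw [Finset.mem_filter] at hy
    rw [Finset.mem_filter]
    refine ⟨Finset.mem_univ _, ?_⟩
    by_cases hey : e ∈ y
    · rw [if_pos hey]
      exact Finset.subset_erase.2 ⟨hy.2, heT⟩
    · rw [if_neg hey]
      exact hy.2.trans (Finset.subset_insert e y)

lemma ort_choose (n m t : ℕ) (ht : t < m) :
    ∑ j ∈ Finset.range (n+1), (n.choose j : ℝ) * kraw n m j * (j.choose t : ℝ) = 0 := by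
  have hmaps : ∀ x ∈ (univ : Finset (Finset (Fin n))), x.card ∈ Finset.range (n+1) := by
    intro x _
    rw [Finset.mem_range, Nat.lt_succ_iff]
    simpa using Finset.card_le_card (Finset.subset_univ x)
  have h1 : ∑ j ∈ Finset.range (n+1), (n.choose j : ℝ) * kraw n m j * (j.choose t : ℝ)
      = ∑ x : Finset (Fin n), kraw n m x.card * (x.card.choose t : ℝ) := by
    rw [← Finset.sum_fiberwise_of_maps_to hmaps]
    refine Finset.sum_congr rfl fun j hj => ?_
    have hthis : ∀ x ∈ (univ : Finset (Finset (Fin n))).filter fun x => x.card = j,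
        kraw n m x.card * (x.card.choose t : ℝ) = kraw n m j * (j.choose t : ℝ) := by
      intro x hx
      rw [(Finset.mem_filter.1 hx).2]
    rw [Finset.sum_congr rfl hthis, Finset.sum_const, nsmul_eq_mul]
    have hcard : ((univ : Finset (Finset (Fin n))).filter fun x => x.card = j).card = n.choose j := by
      have : (univ : Finset (Finset (Fin n))).filter (fun x => x.card = j)
          = powersetCard j (univ : Finset (Fin n)) := by
        ext y
        simp [Finset.mem_powersetCard, Finset.subset_univ]
      rw [this, Finset.card_powersetCard, Finset.card_univ, Fintype.card_fin]
    rw [hcard]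
    ring
  rw [h1]
  have h2 : ∀ x : Finset (Fin n), kraw n m x.card * (x.card.choose t : ℝ)
      = ∑ S ∈ powersetCard m (univ : Finset (Fin n)), ∑ T ∈ powersetCard t x,
          (-1:ℝ)^((S ∩ x).card) := by
    intro x
    rw [kraw_as_sum n m x, Finset.sum_mul]
    refine Finset.sum_congr rfl fun S _ => ?_
    rw [← Finset.card_powersetCard t x, Finset.cast_card, Finset.mul_sum]
    simp
  rw [Finset.sum_congr rfl fun x _ => h2 x, Finset.sum_comm]
  apply Finset.sum_eq_zero
  intro S hS
  have hswap : ∑ x : Finset (Fin n), ∑ T ∈ powersetCard t x, (-1:ℝ)^((S ∩ x).card)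
      = ∑ T ∈ powersetCard t (univ : Finset (Fin n)),
          ∑ x ∈ (univ : Finset (Finset (Fin n))).filter (fun x => T ⊆ x), (-1:ℝ)^((S ∩ x).card) := by
    apply Finset.sum_comm'
    intro x T
    simp only [Finset.mem_univ, true_and, Finset.mem_powersetCard, Finset.mem_filter]
    have := Finset.subset_univ T
    tauto
  rw [hswap]
  apply Finset.sum_eq_zero
  intro T hT
  apply sum_parity_zero
  rw [Finset.sdiff_nonempty]
  intro hsub
  rw [Finset.mem_powersetCard] at hS hT
  have := Finset.card_le_card hsub
  omega


lemma bpoly_eval_nat (t j : ℕ) : (bpoly t).eval (j:ℝ) = (j.choose t : ℝ) * (t.factorial : ℝ) := by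
  rw [bpoly_eval]
  have h := rchoose_nat j t
  rw [rchoose, div_eq_iff (by exact_mod_cast t.factorial_ne_zero : (t.factorial:ℝ) ≠ 0)] at h
  exact h

lemma ort_bpoly (n m t : ℕ) (ht : t < m) :
    ∑ j ∈ Finset.range (n+1), (n.choose j : ℝ) * kraw n m j * (bpoly t).eval (j:ℝ) = 0 := by
  have h : ∀ j ∈ Finset.range (n+1), (n.choose j : ℝ) * kraw n m j * (bpoly t).eval (j:ℝ)
      = ((n.choose j : ℝ) * kraw n m j * (j.choose t : ℝ)) * (t.factorial : ℝ) := by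
    intro j _; rw [bpoly_eval_nat]; ring
  rw [Finset.sum_congr rfl h, ← Finset.sum_mul, ort_choose n m t ht, zero_mul]

lemma ort_poly (n m : ℕ) : ∀ s : ℕ, s < m → ∀ q : Polynomial ℝ, q.natDegree ≤ s →
    ∑ j ∈ Finset.range (n+1), (n.choose j : ℝ) * kraw n m j * q.eval (j:ℝ) = 0 := by
  intro s
  induction s with
  | zero =>
    intro hm q hq
    set c := q.coeff 0 with hc
    have hqc : q = Polynomial.C c := Polynomial.eq_C_of_natDegree_le_zero hq
    have h : ∀ j ∈ Finset.range (n+1), (n.choose j : ℝ) * kraw n m j * q.eval (j:ℝ)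
        = ((n.choose j : ℝ) * kraw n m j * (bpoly 0).eval (j:ℝ)) * c := by
      intro j _
      rw [hqc, Polynomial.eval_C]
      simp [bpoly]
    rw [Finset.sum_congr rfl h, ← Finset.sum_mul, ort_bpoly n m 0 hm, zero_mul]
  | succ s ih =>
    intro hm q hq
    by_cases hqs : q.natDegree ≤ s
    · exact ih (Nat.lt_of_succ_lt hm) q hqs
    · set c := q.coeff (s+1) with hc
      have hb1 : (bpoly (s+1)).coeff (s+1) = 1 := by
        have h := (bpoly_monic (s+1)).coeff_natDegree
        rwa [bpoly_natDegree] at h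
      set q' := q - Polynomial.C c * bpoly (s+1) with hq'
      have hq'deg : q'.natDegree ≤ s := by
        rw [Polynomial.natDegree_le_iff_coeff_eq_zero]
        intro N hN
        rw [hq', Polynomial.coeff_sub, Polynomial.coeff_C_mul]
        rcases eq_or_lt_of_le (Nat.succ_le_of_lt hN) with h | h
        · rw [← h, hb1, mul_one, hc, sub_self]
        · rw [Polynomial.coeff_eq_zero_of_natDegree_lt (lt_of_le_of_lt hq h),
            Polynomial.coeff_eq_zero_of_natDegree_lt (by rw [bpoly_natDegree]; exact h),
            mul_zero, sub_zero]
      have hsum : ∀ j ∈ Finset.range (n+1), (n.choose j : ℝ) * kraw n m j * q.eval (j:ℝ)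
          = (n.choose j : ℝ) * kraw n m j * q'.eval (j:ℝ)
            + ((n.choose j : ℝ) * kraw n m j * (bpoly (s+1)).eval (j:ℝ)) * c := by
        intro j _
        have hqq : q = q' + Polynomial.C c * bpoly (s+1) := by rw [hq']; ring
        rw [hqq, Polynomial.eval_add, Polynomial.eval_mul, Polynomial.eval_C]
        ring
      rw [Finset.sum_congr rfl hsum, Finset.sum_add_distrib, ← Finset.sum_mul,
        ih (Nat.lt_of_succ_lt hm) q' hq'deg, ort_bpoly n m (s+1) hm, zero_mul, add_zero]

lemma ort_main (n m : ℕ) (q : Polynomial ℝ) (hq : q.natDegree < m) :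
    ∑ j ∈ Finset.range (n+1), (n.choose j : ℝ) * (krawPoly n m).eval (j:ℝ) * q.eval (j:ℝ) = 0 := by
  have h := ort_poly n m q.natDegree hq q le_rfl
  rw [← h]
  refine Finset.sum_congr rfl fun j hj => ?_
  have hjn : j ≤ n := Nat.lt_succ_iff.1 (Finset.mem_range.1 hj)
  rw [krawPoly_eval, krawR_nat n m j hjn]

lemma sign_dichotomy (w : Polynomial ℝ) (hw : ∀ x : ℝ, w.eval x ≠ 0) :
    (∀ x : ℝ, 0 < w.eval x) ∨ (∀ x : ℝ, w.eval x < 0) := by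
  have hcont := w.continuous
  have key : ∀ a b : ℝ, 0 < w.eval a → w.eval b < 0 → False := by
    intro a b ha hb
    rcases le_total a b with hab | hab
    · obtain ⟨c, _, hceq⟩ := intermediate_value_Icc' hab hcont.continuousOn
        (Set.mem_Icc.2 ⟨le_of_lt hb, le_of_lt ha⟩)
      exact hw c hceq
    · obtain ⟨c, _, hceq⟩ := intermediate_value_Icc hab hcont.continuousOn
        (Set.mem_Icc.2 ⟨le_of_lt hb, le_of_lt ha⟩)
      exact hw c hceq
  by_cases h : 0 < w.eval 0
  · left; intro x
    rcases lt_trichotomy (w.eval x) 0 with hx | hx | hx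
    · exact ((key 0 x h hx)).elim
    · exact (hw x hx).elim
    · exact hx
  · right; intro x
    have h0 : w.eval 0 < 0 := lt_of_le_of_ne (not_lt.1 h) (hw 0)
    rcases lt_trichotomy (w.eval x) 0 with hx | hx | hx
    · exact hx
    · exact (hw x hx).elim
    · exact (key x 0 hx h0).elim

lemma multiset_map_prod_pos (f : ℝ → ℝ) (s : Multiset ℝ) :
    (∀ r ∈ s, 0 < f r) → 0 < (s.map f).prod := by
  refine Multiset.induction_on s (fun _ => by simp) fun a t ih h => ?_
  rw [Multiset.map_cons, Multiset.prod_cons]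
  exact mul_pos (h a (Multiset.mem_cons_self a t))
    (ih fun r hr => h r (Multiset.mem_cons_of_mem hr))

lemma multiset_map_prod_le (f g : ℝ → ℝ) (s : Multiset ℝ) :
    (∀ r ∈ s, 0 < f r) → (∀ r ∈ s, f r ≤ g r) → (s.map f).prod ≤ (s.map g).prod := by
  refine Multiset.induction_on s (fun _ _ => le_refl _) fun a t ih h0 h1 => ?_
  rw [Multiset.map_cons, Multiset.prod_cons, Multiset.map_cons, Multiset.prod_cons]
  have hfa := h0 a (Multiset.mem_cons_self a t)
  have hprod := multiset_map_prod_pos f t (fun r hr => h0 r (Multiset.mem_cons_of_mem hr))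
  exact mul_le_mul (h1 a (Multiset.mem_cons_self a t))
    (ih (fun r hr => h0 r (Multiset.mem_cons_of_mem hr))
      (fun r hr => h1 r (Multiset.mem_cons_of_mem hr)))
    (le_of_lt hprod)
    (le_trans (le_of_lt hfa) (h1 a (Multiset.mem_cons_self a t)))

lemma krawPoly_splits (n m : ℕ) (hm : m ≤ n) :
    krawPoly n m = Polynomial.C (krawPoly n m).leadingCoeff *
      ((krawPoly n m).roots.map fun a => Polynomial.X - Polynomial.C a).prod := by
  set p := krawPoly n m with hp
  have hp0 : p ≠ 0 := krawPoly_ne_zero n m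
  have hpeval0 : 0 < p.eval 0 := by
    rw [hp, krawPoly_eval, krawR_zero]; exact rchoose_pos n m hm
  obtain ⟨w, hw⟩ := Polynomial.prod_multiset_X_sub_C_dvd p
  have hw0 : w ≠ 0 := by
    intro h; rw [h, mul_zero] at hw; exact hp0 hw
  have hwroots : w.roots = 0 := by
    have h1 : p.roots = p.roots + w.roots := by
      conv_lhs => rw [hw]
      rw [Polynomial.roots_mul (hw ▸ hp0), Polynomial.roots_multiset_prod_X_sub_C]
    have h2 := congrArg Multiset.card h1
    rw [Multiset.card_add] at h2
    have : Multiset.card w.roots = 0 := by omega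
    exact Multiset.card_eq_zero.1 this
  have hwne : ∀ x : ℝ, w.eval x ≠ 0 := by
    intro x hx
    have hxw : x ∈ w.roots := Polynomial.mem_roots'.2 ⟨hw0, hx⟩
    rw [hwroots] at hxw
    exact Multiset.notMem_zero x hxw
  classical
  set D := p.roots.toFinset.filter (fun r => Odd (p.roots.count r)) with hD
  have hDcard : m ≤ D.card := by
    by_contra hlt
    push_neg at hlt
    set q₁ := ∏ r ∈ D, (Polynomial.X - Polynomial.C r) with hq₁
    have hq₁deg : q₁.natDegree < m := by
      rw [hq₁, Polynomial.natDegree_prod_of_monic _ _ (fun r _ => Polynomial.monic_X_sub_C r),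
        Finset.sum_congr rfl (fun r _ => Polynomial.natDegree_X_sub_C (x := r)),
        Finset.sum_const, smul_eq_mul, mul_one]
      exact hlt
    have hort := ort_main n m q₁ hq₁deg
    rw [← hp] at hort
    have hexpr : ∀ x : ℝ, p.eval x * q₁.eval x
        = w.eval x * ∏ r ∈ p.roots.toFinset,
            (x - r)^(p.roots.count r + if Odd (p.roots.count r) then 1 else 0) := by
      intro x
      have h1 : p.eval x = (p.roots.map fun a => x - a).prod * w.eval x := by
        conv_lhs => rw [hw]
        rw [Polynomial.eval_mul, Polynomial.eval_multiset_prod, Multiset.map_map]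
        congr 1
        apply congrArg Multiset.prod
        apply Multiset.map_congr rfl
        intro a _; simp
      have h2 : (p.roots.map fun a => x - a).prod
          = ∏ r ∈ p.roots.toFinset, (x - r) ^ (p.roots.count r) :=
        Finset.prod_multiset_map_count _ _
      have h3 : q₁.eval x = ∏ r ∈ D, (x - r) := by
        rw [hq₁, Polynomial.eval_prod]; simp
      have h4 : ∏ r ∈ D, (x - r) = ∏ r ∈ p.roots.toFinset,
          (if Odd (p.roots.count r) then (x - r) else 1) := by
        rw [hD, Finset.prod_filter]
      have h5 : ∀ r ∈ p.roots.toFinset,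
          (x - r)^(p.roots.count r) * (if Odd (p.roots.count r) then (x - r) else 1)
            = (x - r)^(p.roots.count r + if Odd (p.roots.count r) then 1 else 0) := by
        intro r _
        by_cases hodd : Odd (p.roots.count r)
        · rw [if_pos hodd, if_pos hodd, pow_add, pow_one]
        · rw [if_neg hodd, if_neg hodd, mul_one, Nat.add_zero]
      calc p.eval x * q₁.eval x
          = ((∏ r ∈ p.roots.toFinset, (x - r) ^ (p.roots.count r)) * w.eval x)
            * ∏ r ∈ p.roots.toFinset, (if Odd (p.roots.count r) then (x - r) else 1) := by
            rw [h1, h2, h3, h4]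
        _ = w.eval x * ∏ r ∈ p.roots.toFinset,
              ((x - r)^(p.roots.count r) * (if Odd (p.roots.count r) then (x - r) else 1)) := by
            rw [Finset.prod_mul_distrib]; ring
        _ = w.eval x * ∏ r ∈ p.roots.toFinset,
              (x - r)^(p.roots.count r + if Odd (p.roots.count r) then 1 else 0) := by
            rw [Finset.prod_congr rfl h5]
    have hnonneg : ∀ x : ℝ, 0 ≤ ∏ r ∈ p.roots.toFinset,
        (x - r)^(p.roots.count r + if Odd (p.roots.count r) then 1 else 0) := by
      intro x
      apply Finset.prod_nonneg
      intro r _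
      apply Even.pow_nonneg
      by_cases hodd : Odd (p.roots.count r)
      · rw [if_pos hodd]; exact Odd.add_one hodd
      · rw [if_neg hodd, Nat.add_zero]; exact Nat.not_odd_iff_even.1 hodd
    have hq₁0 : q₁.eval 0 ≠ 0 := by
      rw [hq₁, Polynomial.eval_prod]
      apply Finset.prod_ne_zero_iff.2
      intro r hr
      simp only [Polynomial.eval_sub, Polynomial.eval_X, Polynomial.eval_C, zero_sub, neg_ne_zero]
      intro h0r
      have hrroot : r ∈ p.roots := Multiset.mem_toFinset.1 (Finset.mem_filter.1 (hD ▸ hr)).1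
      have := (Polynomial.mem_roots'.1 hrroot).2
      rw [Polynomial.IsRoot] at this
      rw [h0r] at this
      exact (ne_of_gt hpeval0) this
    have h00mem : (0:ℕ) ∈ Finset.range (n+1) := Finset.mem_range.2 (Nat.succ_pos n)
    rcases sign_dichotomy w hwne with hpos | hneg
    · have hterms : ∀ j ∈ Finset.range (n+1),
          0 ≤ (n.choose j : ℝ) * p.eval (j:ℝ) * q₁.eval (j:ℝ) := by
        intro j _
        have h6 : 0 ≤ p.eval (j:ℝ) * q₁.eval (j:ℝ) := by
          rw [hexpr]; exact mul_nonneg (le_of_lt (hpos _)) (hnonneg _)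
        rw [mul_assoc]
        exact mul_nonneg (by positivity) h6
      have hzero := (Finset.sum_eq_zero_iff_of_nonneg hterms).1 hort 0 h00mem
      rw [Nat.choose_zero_right, Nat.cast_one, one_mul, Nat.cast_zero] at hzero
      rcases mul_eq_zero.1 hzero with h | h
      · exact (ne_of_gt hpeval0) h
      · exact hq₁0 h
    · have hterms : ∀ j ∈ Finset.range (n+1),
          (n.choose j : ℝ) * p.eval (j:ℝ) * q₁.eval (j:ℝ) ≤ 0 := by
        intro j _
        have h6 : p.eval (j:ℝ) * q₁.eval (j:ℝ) ≤ 0 := by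
          rw [hexpr]
          exact mul_nonpos_of_nonpos_of_nonneg (le_of_lt (hneg _)) (hnonneg _)
        rw [mul_assoc]
        exact mul_nonpos_of_nonneg_of_nonpos (by positivity) h6
      have hzero := (Finset.sum_eq_zero_iff_of_nonpos hterms).1 hort 0 h00mem
      rw [Nat.choose_zero_right, Nat.cast_one, one_mul, Nat.cast_zero] at hzero
      rcases mul_eq_zero.1 hzero with h | h
      · exact (ne_of_gt hpeval0) h
      · exact hq₁0 h
  have hcard1 : p.roots.toFinset.card ≤ Multiset.card p.roots := Multiset.toFinset_card_le _
  have hD2 : D.card ≤ p.roots.toFinset.card := Finset.card_filter_le _ _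
  have hdeg : p.natDegree = m := by rw [hp]; exact krawPoly_natDegree n m
  have hcard2 : Multiset.card p.roots ≤ m := hdeg ▸ p.card_roots'
  have hroots_card : Multiset.card p.roots = p.natDegree := by
    rw [hdeg]
    omega
  exact (Polynomial.C_leadingCoeff_mul_prod_multiset_X_sub_C hroots_card).symm

lemma krawR_pos_below (n m : ℕ) (hm : m ≤ n) (x₁ : ℝ)
    (hmin : ∀ y : ℝ, krawR n m y = 0 → x₁ ≤ y)
    (y : ℝ) (h0 : 0 ≤ y) (h1 : y < x₁) : 0 < krawR n m y := by
  have hceq : krawR n m = fun x => (krawPoly n m).eval x := by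
    funext x; rw [krawPoly_eval]
  have hc : Continuous (krawR n m) := by
    rw [hceq]; exact (krawPoly n m).continuous
  have h00 : 0 < krawR n m 0 := by
    rw [krawR_zero]; exact rchoose_pos n m hm
  by_contra hle
  push_neg at hle
  rcases eq_or_lt_of_le hle with he | hlt
  · exact absurd (hmin y he) (not_le.2 h1)
  · have hmem : (0:ℝ) ∈ Set.Icc (krawR n m y) (krawR n m 0) := ⟨le_of_lt hlt, le_of_lt h00⟩
    obtain ⟨c, hcmem, hceq2⟩ := intermediate_value_Icc' h0 hc.continuousOn hmem
    exact absurd (hmin c hceq2) (not_le.2 (lt_of_le_of_lt hcmem.2 h1))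


theorem kraw_ratio_bound_between_beta_and_root (n m d : ℕ) (β δ x₁ : ℝ)
    (hn : 0 < n) (hm : m ≤ n)
    (hδ : (d : ℝ) = δ * n) (h0 : 0 < δ) (hβδ : δ < β) (hβ : β < 1 / 2)
    (hroot : krawR n m x₁ = 0)
    (hmin : ∀ y : ℝ, krawR n m y = 0 → x₁ ≤ y)
    (hx₁ : β * n < x₁ - 1) :
    ∀ i : ℕ, β * n ≤ (i : ℝ) → (i : ℝ) ≤ x₁ - 1 →
      0 < krawR n m i ∧
      krawR n m i / krawR n m d ≤ (x₁ - i) / (x₁ - d) ∧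
      (x₁ - i) / (x₁ - d) ≤ (1 - 2 * β) / (2 * β - 2 * δ) := by
  intro i hiβ hix
  have hn' : (0:ℝ) < n := by exact_mod_cast hn
  have hβn : δ * n < β * n := by nlinarith
  have hdlt : (d:ℝ) < β * n := by rw [hδ]; exact hβn
  have hd_lt_i : (d:ℝ) < i := lt_of_lt_of_le hdlt hiβ
  have hdx : (d:ℝ) < x₁ - 1 := lt_trans hdlt hx₁
  have hKi : 0 < krawR n m i :=
    krawR_pos_below n m hm x₁ hmin i (Nat.cast_nonneg i) (by linarith)
  have hKd : 0 < krawR n m d :=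
    krawR_pos_below n m hm x₁ hmin d (Nat.cast_nonneg d) (by linarith)
  have hx₁d : (0:ℝ) < x₁ - d := by linarith
  have hx₁i : (0:ℝ) ≤ x₁ - i := by linarith
  refine ⟨hKi, ?_, ?_⟩
  · -- main ratio bound
    set p := krawPoly n m with hp
    have hsplit := krawPoly_splits n m hm
    rw [← hp] at hsplit
    have hp0 : p ≠ 0 := krawPoly_ne_zero n m
    have hx₁mem : x₁ ∈ p.roots := by
      apply Polynomial.mem_roots'.2
      refine ⟨hp0, ?_⟩
      rw [Polynomial.IsRoot, hp, krawPoly_eval]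
      exact hroot
    set rest := p.roots.erase x₁ with hrest
    have hcons : p.roots = x₁ ::ₘ rest := (Multiset.cons_erase hx₁mem).symm
    have hallroots : ∀ r ∈ p.roots, x₁ ≤ r := by
      intro r hr
      apply hmin
      have h := (Polynomial.mem_roots'.1 hr).2
      rw [Polynomial.IsRoot, hp, krawPoly_eval] at h
      exact h
    have hrest_roots : ∀ r ∈ rest, x₁ ≤ r := fun r hr =>
      hallroots r (by rw [hcons]; exact Multiset.mem_cons_of_mem hr)
    have hKeval : ∀ y : ℝ, krawR n m y
        = (p.leadingCoeff * (-1:ℝ)^(Multiset.card rest + 1))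
            * ((x₁ - y) * ((rest.map fun r => r - y).prod)) := by
      intro y
      rw [show krawR n m y = p.eval y by rw [hp, krawPoly_eval]]
      conv_lhs => rw [hsplit]
      rw [Polynomial.eval_mul, Polynomial.eval_C, Polynomial.eval_multiset_prod,
        Multiset.map_map, hcons, Multiset.map_cons, Multiset.prod_cons]
      have hmapeq : rest.map ((fun q => Polynomial.eval y q) ∘ fun a => Polynomial.X - Polynomial.C a)
          = rest.map (fun a => (-1) * (a - y)) := by
        apply Multiset.map_congr rfl
        intro a _
        simp only [Function.comp_apply, Polynomial.eval_sub, Polynomial.eval_X, Polynomial.eval_C]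
        ring
      rw [hmapeq, Multiset.prod_map_mul]
      have hconst : (rest.map fun _ => (-1:ℝ)).prod = (-1:ℝ)^(Multiset.card rest) := by
        rw [Multiset.map_const']
        exact Multiset.prod_replicate _ _
      rw [hconst]
      simp only [Function.comp, Polynomial.eval_sub, Polynomial.eval_X, Polynomial.eval_C]
      rw [pow_succ]
      ring
    have hFi_pos : 0 < (rest.map fun r => r - (i:ℝ)).prod :=
      multiset_map_prod_pos _ rest (fun r hr => by have := hrest_roots r hr; linarith)
    have hFd_pos : 0 < (rest.map fun r => r - (d:ℝ)).prod :=
      multiset_map_prod_pos _ rest (fun r hr => by have := hrest_roots r hr; linarith)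
    have hF_le : (rest.map fun r => r - (i:ℝ)).prod ≤ (rest.map fun r => r - (d:ℝ)).prod :=
      multiset_map_prod_le _ _ rest (fun r hr => by have := hrest_roots r hr; linarith)
        (fun r hr => by linarith)
    set σ := p.leadingCoeff * (-1:ℝ)^(Multiset.card rest + 1) with hσdef
    have hKi_eq := hKeval i
    have hKd_eq := hKeval d
    have hσpos : 0 < σ := by
      by_contra hσ
      push_neg at hσ
      have hnp : krawR n m (d:ℝ) ≤ 0 := by
        rw [hKd_eq]
        have : 0 ≤ (x₁ - (d:ℝ)) * (rest.map fun r => r - (d:ℝ)).prod :=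
          mul_nonneg (le_of_lt hx₁d) (le_of_lt hFd_pos)
        exact mul_nonpos_of_nonpos_of_nonneg hσ this
      linarith
    rw [div_le_div_iff₀ hKd hx₁d]
    rw [hKi_eq, hKd_eq]
    have hcoef : 0 ≤ σ * ((x₁ - (i:ℝ)) * (x₁ - (d:ℝ))) := by positivity
    have hkey := mul_le_mul_of_nonneg_left hF_le hcoef
    nlinarith [hkey]
  · -- numeric bound
    have hhalf : x₁ ≤ (n:ℝ)/2 := by
      have hrefl : krawR n m ((n:ℝ) - x₁) = 0 := by
        rw [krawR_reflect, hroot, mul_zero]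
      have := hmin _ hrefl
      linarith
    have h2βδ : (0:ℝ) < 2*β - 2*δ := by linarith
    rw [div_le_div_iff₀ hx₁d h2βδ]
    have hnum : x₁ - (i:ℝ) ≤ (n:ℝ)/2 - β*n := by linarith
    have hden : β*n - δ*n ≤ x₁ - (d:ℝ) := by rw [hδ]; linarith
    have h1 := mul_le_mul_of_nonneg_right hnum (le_of_lt h2βδ)
    have h2 := mul_le_mul_of_nonneg_left hden (by linarith : (0:ℝ) ≤ 1 - 2*β)
    nlinarith [h1, h2]


end Cube
end
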